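/- The number of elements of the free tree monoid FT(X) on a totally ordered alphabet of size n equals a(n), where a(0) = 1 and a(k) = a(k−1)² + a(k−1). Equivalently, a word u over X is reduced if and only if: the largest letter y appears at most once in u, and if u = v·y·w then v and w are recursively reduced words over X \ {y}. -/

import Mathlib

/-- The defining relations of the free tree monoid `FT(X)`: `x·x = x` for every `x`, and
`y·x·y = y·x` whenever `x < y`. -/
def ftRel (X : Type*) [LinearOrder X] : FreeMonoid X → FreeMonoid X → Prop := fun a b =>
  (∃ x : X, a = FreeMonoid.of x * FreeMonoid.of x ∧ b = FreeMonoid.of x) ∨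
  (∃ x y : X, x < y ∧ a = FreeMonoid.of y * FreeMonoid.of x * FreeMonoid.of y ∧
    b = FreeMonoid.of y * FreeMonoid.of x)

/-- The free tree monoid `FT(X)` on a totally ordered alphabet `X`. -/
def FreeTreeMonoid (X : Type*) [LinearOrder X] :=
  (conGen (ftRel X)).Quotient

/-- The counting sequence `a(0) = 1`, `a(k) = a(k-1)² + a(k-1)`. -/
def ftCount : ℕ → ℕ
  | 0 => 1
  | k + 1 => ftCount k ^ 2 + ftCount k

/-- A word is *reduced* for the free tree monoid if it contains no factor `y ++ w ++ y` with all
letters of `w` strictly smaller than `y` (equivalently, no rewriting rule applies to it). -/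
def FTReduced {X : Type*} [LinearOrder X] (u : List X) : Prop :=
  ¬ ∃ (v w z : List X) (y : X), (∀ a ∈ w, a < y) ∧ u = v ++ [y] ++ w ++ [y] ++ z

namespace FTAux
variable {X : Type*} [LinearOrder X]

theorem exists_first (y : X) : ∀ (l : List X), y ∈ l → ∃ s t, l = s ++ y :: t ∧ y ∉ s := by
  intro l hl
  induction l with
  | nil => simp at hl
  | cons a l ih =>
    by_cases hay : a = y
    · exact ⟨[], l, by simp [hay], by simp⟩
    · have hy : y ∈ l := by
        rcases List.mem_cons.1 hl with h | h
        · exact absurd h.symm hay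
        · exact h
      obtain ⟨s, t, hst, hns⟩ := ih hy
      refine ⟨a :: s, t, by simp [hst], ?_⟩
      simp only [List.mem_cons]
      rintro (rfl | hmem)
      · exact hay rfl
      · exact hns hmem

theorem exists_max : ∀ (l : List X), l ≠ [] → ∃ y ∈ l, ∀ a ∈ l, a ≤ y := by
  intro l hl
  induction l with
  | nil => simp at hl
  | cons a l ih =>
    rcases eq_or_ne l [] with rfl | hne
    · exact ⟨a, by simp⟩
    · obtain ⟨y, hy, hmax⟩ := ih hne
      rcases le_total a y with h | h
      · exact ⟨y, by simp [hy], by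
          intro b hb
          rcases List.mem_cons.1 hb with rfl | hb
          · exact h
          · exact hmax b hb⟩
      · exact ⟨a, by simp, by
          intro b hb
          rcases List.mem_cons.1 hb with rfl | hb
          · exact le_rfl
          · exact (hmax b hb).trans h⟩

theorem reduced_infix {u l : List X} (h : FTReduced u) (hl : l <:+: u) : FTReduced l := by
  rintro ⟨v, w, z, y, hw, rfl⟩
  obtain ⟨s, t, rfl⟩ := hl
  exact h ⟨s ++ v, w, z ++ t, y, hw, by simp⟩

theorem place {v z v0 w0 t : List X} {y y0 : X}
    (h : v ++ (y :: t) ++ z = v0 ++ [y0] ++ w0) (hy : y0 ∉ y :: t) :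
    (y :: t) <:+: v0 ∨ (y :: t) <:+: w0 := by
  rw [List.append_assoc, List.append_assoc] at h
  rcases List.append_eq_append_iff.1 h with ⟨a, hv0, ha⟩ | ⟨c, hv, hc⟩
  · rcases List.append_eq_append_iff.1 ha with ⟨b, hab, hz⟩ | ⟨b, hyt, hb⟩
    · exact Or.inl ⟨v, b, by rw [hv0, hab]; simp⟩
    · rcases b with _ | ⟨c', b'⟩
      · simp at hyt
        exact Or.inl ⟨v, [], by rw [hv0, ← hyt]; simp⟩
      · exfalso
        have : c' = y0 := by
          have h2 := congrArg (fun l => l.head?) hb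
          simp at h2
          exact h2.symm
        apply hy
        rw [hyt, this]
        simp
  · rcases c with _ | ⟨c0, c'⟩
    · exfalso
      simp at hc
      apply hy
      rw [← hc.1]
      simp
    · rw [List.cons_append, List.cons_append, List.cons.injEq] at hc
      exact Or.inr ⟨c', z, by simpa using hc.2.symm⟩

theorem reduced_iff (u : List X) : FTReduced u ↔
    ∀ y : X, (∀ a ∈ u, a ≤ y) →
      u.count y ≤ 1 ∧ ∀ v w : List X, u = v ++ [y] ++ w → FTReduced v ∧ FTReduced w := by
  constructor
  · intro h y hdom
    constructor
    · by_contra hcnt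
      push_neg at hcnt
      have hmem : y ∈ u := by
        by_contra hm
        rw [List.count_eq_zero_of_not_mem hm] at hcnt
        omega
      obtain ⟨v, r, rfl, hv⟩ := exists_first y u hmem
      have hyr : y ∈ r := by
        by_contra hm
        rw [List.count_append, List.count_eq_zero_of_not_mem hv, List.count_cons_self,
          List.count_eq_zero_of_not_mem hm] at hcnt
        omega
      obtain ⟨w1, w2, rfl, hw1⟩ := exists_first y r hyr
      refine h ⟨v, w1, w2, y, ?_, by simp⟩
      intro a ha
      refine lt_of_le_of_ne (hdom a ?_) (fun hay => hw1 (hay ▸ ha))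
      simp [ha]
    · intro v w hvw
      constructor
      · exact reduced_infix h ⟨[], [y] ++ w, by rw [hvw]; simp⟩
      · exact reduced_infix h ⟨v ++ [y], [], by rw [hvw]; simp⟩
  · rintro h ⟨v, w, z, y, hw, rfl⟩
    set u := v ++ [y] ++ w ++ [y] ++ z with hu
    have hyu : y ∈ u := by simp [hu]
    obtain ⟨y0, hy0u, hy0max⟩ := exists_max u (by intro h0; rw [h0] at hyu; simp at hyu)
    obtain ⟨hcnt, hsplit⟩ := h y0 hy0max
    obtain ⟨v0, w0, hu0, hv0⟩ := exists_first y0 u hy0u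
    have hcv0 : y0 ∉ w0 := by
      by_contra hm
      rw [hu0, List.count_append, List.count_cons_self,
        List.count_eq_zero_of_not_mem hv0] at hcnt
      have := List.count_pos_iff.2 hm
      omega
    obtain ⟨hrv0, hrw0⟩ := hsplit v0 w0 (by rw [hu0]; simp)
    have hyne : y ≠ y0 := by
      rintro rfl
      rw [hu, List.count_append, List.count_append, List.count_append,
        List.count_append] at hcnt
      simp [List.count_singleton] at hcnt
      omega
    have hylt : y < y0 := lt_of_le_of_ne (hy0max y hyu) hyne
    have hall : ∀ a ∈ y :: (w ++ [y]), a < y0 := by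
      intro a ha
      rcases List.mem_cons.1 ha with rfl | ha
      · exact hylt
      rcases List.mem_append.1 ha with ha | ha
      · exact (hw a ha).trans hylt
      · rw [List.mem_singleton.1 ha]; exact hylt
    have hy0f : y0 ∉ y :: (w ++ [y]) := fun hm => lt_irrefl _ (hall _ hm)
    have heq : v ++ (y :: (w ++ [y])) ++ z = v0 ++ [y0] ++ w0 := by
      rw [show v0 ++ [y0] ++ w0 = v0 ++ y0 :: w0 by simp, ← hu0, hu]
      simp
    rcases place heq hy0f with hin | hin
    · obtain ⟨s, t, hst⟩ := hin
      exact hrv0 ⟨s, w, t, y, hw, by rw [← hst]; simp⟩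
    · obtain ⟨s, t, hst⟩ := hin
      exact hrw0 ⟨s, w, t, y, hw, by rw [← hst]; simp⟩

end FTAux

namespace FTAux

open FreeMonoid

/-- squash: `y·t·y ~ y·t` when all letters of `t` are below `y`. -/
theorem squash {X : Type*} [LinearOrder X] (y : X) :
    ∀ (t : List X), (∀ a ∈ t, a < y) →
      conGen (ftRel X) (of y * FreeMonoid.ofList t * of y) (of y * FreeMonoid.ofList t) := by
  intro t
  induction t with
  | nil =>
    intro _
    have h : conGen (ftRel X) (FreeMonoid.of y * FreeMonoid.of y) (FreeMonoid.of y) :=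
      ConGen.Rel.of _ _ (Or.inl ⟨y, rfl, rfl⟩)
    simpa using h
  | cons x t ih =>
    intro hlt
    have hx : x < y := hlt x (by simp)
    have hih := ih (fun a ha => hlt a (by simp [ha]))
    set c : Con (FreeMonoid X) := conGen (ftRel X)
    have base : c (of y * of x * of y) (of y * of x) :=
      ConGen.Rel.of _ _ (Or.inr ⟨x, y, hx, rfl, rfl⟩)
    have hlist : FreeMonoid.ofList (x :: t) = of x * FreeMonoid.ofList t := rfl
    rw [hlist]
    have h1 : c (of y * of x * (FreeMonoid.ofList t * of y))
        (of y * of x * of y * (FreeMonoid.ofList t * of y)) :=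
      c.mul (c.symm base) (c.refl _)
    have h2 : c (of y * of x * (of y * FreeMonoid.ofList t * of y))
        (of y * of x * (of y * FreeMonoid.ofList t)) :=
      c.mul (c.refl _) hih
    have h3 : c (of y * of x * of y * FreeMonoid.ofList t)
        (of y * of x * FreeMonoid.ofList t) :=
      c.mul base (c.refl _)
    have e1 : of y * of x * of y * (FreeMonoid.ofList t * of y) =
        of y * of x * (of y * FreeMonoid.ofList t * of y) := by
      simp [mul_assoc]
    have e2 : of y * of x * (of y * FreeMonoid.ofList t) =
        of y * of x * of y * FreeMonoid.ofList t := by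
      simp [mul_assoc]
    have goal1 : c (of y * of x * (FreeMonoid.ofList t * of y))
        (of y * of x * FreeMonoid.ofList t) :=
      ((h1.trans (e1 ▸ h2)).trans (e2 ▸ c.refl _)).trans h3
    have e3 : of y * (of x * FreeMonoid.ofList t) * of y =
        of y * of x * (FreeMonoid.ofList t * of y) := by
      simp [mul_assoc]
    have e4 : of y * (of x * FreeMonoid.ofList t) = of y * of x * FreeMonoid.ofList t := by
      simp [mul_assoc]
    rw [e3, e4]
    exact goal1

theorem map_rel {X Y : Type*} [LinearOrder X] [LinearOrder Y] {f : X → Y} (hf : StrictMono f)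
    {u v : FreeMonoid X} (h : conGen (ftRel X) u v) :
    conGen (ftRel Y) (FreeMonoid.map f u) (FreeMonoid.map f v) := by
  induction h with
  | of a b hab =>
    apply ConGen.Rel.of
    rcases hab with ⟨x, rfl, rfl⟩ | ⟨x, y, hxy, rfl, rfl⟩
    · exact Or.inl ⟨f x, by simp, by simp⟩
    · exact Or.inr ⟨f x, f y, hf hxy, by simp, by simp⟩
  | refl => exact (conGen (ftRel Y)).refl _
  | symm _ ih => exact (conGen (ftRel Y)).symm ih
  | trans _ _ ih1 ih2 => exact (conGen (ftRel Y)).trans ih1 ih2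
  | mul _ _ ih1 ih2 => simpa using (conGen (ftRel Y)).mul ih1 ih2

end FTAux

namespace FTAux

def M : ℕ → Type
  | 0 => PUnit
  | n+1 => M n ⊕ (M n × M n)

def Mmul : ∀ n, M n → M n → M n
  | 0, _, _ => PUnit.unit
  | n+1, Sum.inl a, Sum.inl b => Sum.inl (Mmul n a b)
  | n+1, Sum.inl a, Sum.inr vw => Sum.inr (Mmul n a vw.1, vw.2)
  | n+1, Sum.inr vw, Sum.inl b => Sum.inr (vw.1, Mmul n vw.2 b)
  | n+1, Sum.inr vw, Sum.inr vw' => Sum.inr (vw.1, Mmul n (Mmul n vw.2 vw'.1) vw'.2)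

def Mone : ∀ n, M n
  | 0 => PUnit.unit
  | n+1 => Sum.inl (Mone n)

theorem Mmul_assoc : ∀ n (a b c : M n), Mmul n (Mmul n a b) c = Mmul n a (Mmul n b c) := by
  intro n
  induction n with
  | zero => intros; rfl
  | succ n ih =>
    rintro (a | ⟨v, w⟩) (b | ⟨v', w'⟩) (c | ⟨v'', w''⟩) <;> simp [Mmul, ih] <;> rfl

theorem Mone_mul : ∀ n (a : M n), Mmul n (Mone n) a = a := by
  intro n
  induction n with
  | zero => intros; rfl
  | succ n ih => rintro (a | ⟨v, w⟩) <;> simp [Mmul, Mone, ih] <;> rfl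

theorem Mmul_one : ∀ n (a : M n), Mmul n a (Mone n) = a := by
  intro n
  induction n with
  | zero => intros; rfl
  | succ n ih => rintro (a | ⟨v, w⟩) <;> simp [Mmul, Mone, ih] <;> rfl

instance instMonoidM (n : ℕ) : Monoid (M n) where
  mul := Mmul n
  one := Mone n
  mul_assoc := Mmul_assoc n
  one_mul := Mone_mul n
  mul_one := Mmul_one n

theorem mul_def (n : ℕ) (a b : M n) : a * b = Mmul n a b := rfl
theorem one_def (n : ℕ) : (1 : M n) = Mone n := rfl

def g : ∀ n, Fin n → M n
  | 0, x => x.elim0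
  | n+1, x =>
    if h : x = Fin.last n then Sum.inr (Mone n, Mone n)
    else Sum.inl (g n (x.castPred h))

noncomputable def psi (n : ℕ) : FreeMonoid (Fin n) →* M n := FreeMonoid.lift (g n)

def inlHom (n : ℕ) : M n →* M (n+1) where
  toFun := Sum.inl
  map_one' := rfl
  map_mul' := fun _ _ => rfl

theorem castSucc_sm {n : ℕ} : StrictMono (Fin.castSucc : Fin n → Fin (n+1)) :=
  fun _ _ h => by simpa using h

theorem psi_map_castSucc (n : ℕ) (u : FreeMonoid (Fin n)) :
    psi (n+1) (FreeMonoid.map Fin.castSucc u) = Sum.inl (psi n u) := by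
  have : (psi (n+1)).comp (FreeMonoid.map Fin.castSucc) = (inlHom n).comp (psi n) := by
    apply FreeMonoid.hom_eq
    intro x
    simp only [MonoidHom.comp_apply, FreeMonoid.map_of, psi, FreeMonoid.lift_eval_of, inlHom]
    have hne : (Fin.castSucc x) ≠ Fin.last n := (Fin.castSucc_lt_last x).ne
    simp [g, hne]
    rfl
  exact congrFun (congrArg (fun f => f.toFun) this) u

def s : ∀ n, M n → FreeMonoid (Fin n)
  | 0, _ => 1
  | n+1, Sum.inl a => FreeMonoid.map Fin.castSucc (s n a)
  | n+1, Sum.inr vw =>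
    FreeMonoid.map Fin.castSucc (s n vw.1) * FreeMonoid.of (Fin.last n) *
      FreeMonoid.map Fin.castSucc (s n vw.2)

theorem s_one : ∀ n, s n (Mone n) = 1 := by
  intro n
  induction n with
  | zero => rfl
  | succ n ih => simp [s, Mone, ih]

theorem psi_s : ∀ n (m : M n), psi n (s n m) = m := by
  intro n
  induction n with
  | zero => intro m; exact Subsingleton.elim (α := PUnit) _ _
  | succ n ih =>
    rintro (a | ⟨v, w⟩)
    · rw [s, psi_map_castSucc, ih]
    · show psi (n+1) (_ * _ * _) = _
      rw [map_mul, map_mul, psi_map_castSucc, psi_map_castSucc, ih, ih]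
      have hlast : psi (n+1) (FreeMonoid.of (Fin.last n)) = Sum.inr (Mone n, Mone n) := by
        simp [psi, g]
        rfl
      rw [hlast]
      show Mmul (n+1) (Mmul (n+1) (Sum.inl v) (Sum.inr (Mone n, Mone n))) (Sum.inl w) = _
      simp [Mmul, Mmul_one, Mone_mul]
      rfl

end FTAux

namespace FTAux

open FreeMonoid

theorem squash' {X : Type*} [LinearOrder X] (y : X) (t : FreeMonoid X)
    (h : ∀ a ∈ t.toList, a < y) :
    conGen (ftRel X) (of y * t * of y) (of y * t) := by
  have := squash y t.toList h
  rwa [FreeMonoid.ofList_toList] at this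

theorem mem_map_castSucc_lt {n : ℕ} (u : FreeMonoid (Fin n)) :
    ∀ a ∈ (FreeMonoid.map Fin.castSucc u).toList, a < Fin.last n := by
  intro a ha
  rw [FreeMonoid.toList_map] at ha
  obtain ⟨b, _, rfl⟩ := List.mem_map.1 ha
  exact Fin.castSucc_lt_last b

theorem s_mul : ∀ n (a b : M n),
    conGen (ftRel (Fin n)) (s n (Mmul n a b)) (s n a * s n b) := by
  intro n
  induction n with
  | zero => intro a b; exact (conGen _).refl _
  | succ n ih =>
    set c := conGen (ftRel (Fin (n+1))) with hc
    set mc := FreeMonoid.map (Fin.castSucc : Fin n → Fin (n+1)) with hmc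
    set y := FreeMonoid.of (Fin.last n) with hy
    rintro (a | ⟨v, w⟩) (b | ⟨v', w'⟩)
    · show c (mc (s n (Mmul n a b))) (mc (s n a) * mc (s n b))
      rw [← map_mul]
      exact map_rel castSucc_sm (ih a b)
    · show c (mc (s n (Mmul n a v')) * y * mc (s n w'))
        (mc (s n a) * (mc (s n v') * y * mc (s n w')))
      have key := c.mul (c.mul (map_rel castSucc_sm (ih a v')) (c.refl y))
        (c.refl (mc (s n w')))
      rw [show mc (s n a * s n v') = mc (s n a) * mc (s n v') from map_mul mc _ _] at key
      simp only [mul_assoc] at key ⊢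
      exact key
    · show c (mc (s n v) * y * mc (s n (Mmul n w b)))
        ((mc (s n v) * y * mc (s n w)) * mc (s n b))
      have key := c.mul (c.refl (mc (s n v) * y)) (map_rel castSucc_sm (ih w b))
      rw [show mc (s n w * s n b) = mc (s n w) * mc (s n b) from map_mul mc _ _] at key
      simp only [mul_assoc] at key ⊢
      exact key
    · show c (mc (s n v) * y * mc (s n (Mmul n (Mmul n w v') w')))
        ((mc (s n v) * y * mc (s n w)) * (mc (s n v') * y * mc (s n w')))
      have h1 : c (mc (s n (Mmul n (Mmul n w v') w')))
          (mc (s n w) * mc (s n v') * mc (s n w')) := by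
        have t1 := ih (Mmul n w v') w'
        have t2 := (conGen (ftRel (Fin n))).mul (ih w v') ((conGen (ftRel (Fin n))).refl (s n w'))
        have t3 := (conGen (ftRel (Fin n))).trans t1 t2
        have h4 := map_rel castSucc_sm t3
        rwa [show mc (s n w * s n v' * s n w') = mc (s n w) * mc (s n v') * mc (s n w') by
          rw [map_mul mc, map_mul mc]] at h4
      have hA : c (mc (s n v) * y * mc (s n (Mmul n (Mmul n w v') w')))
          (mc (s n v) * y * (mc (s n w) * mc (s n v') * mc (s n w'))) :=
        c.mul (c.refl _) h1
      have hsq : c (y * (mc (s n w) * mc (s n v')) * y) (y * (mc (s n w) * mc (s n v'))) := by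
        apply squash'
        intro a ha
        rw [FreeMonoid.toList_mul] at ha
        rcases List.mem_append.1 ha with ha | ha
        · exact mem_map_castSucc_lt _ a ha
        · exact mem_map_castSucc_lt _ a ha
      have hB : c (mc (s n v) * (y * (mc (s n w) * mc (s n v')) * y) * mc (s n w'))
          (mc (s n v) * (y * (mc (s n w) * mc (s n v'))) * mc (s n w')) :=
        c.mul (c.mul (c.refl _) hsq) (c.refl _)
      simp only [mul_assoc] at hA hB ⊢
      exact c.trans hA (c.symm hB)

theorem s_g : ∀ n (x : Fin n), conGen (ftRel (Fin n)) (s n (g n x)) (FreeMonoid.of x) := by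
  intro n
  induction n with
  | zero => intro x; exact x.elim0
  | succ n ih =>
    intro x
    by_cases h : x = Fin.last n
    · subst h
      have : s (n+1) (g (n+1) (Fin.last n)) = FreeMonoid.of (Fin.last n) := by
        simp [g, s, s_one]
      rw [this]
      exact (conGen _).refl _
    · have hs : s (n+1) (g (n+1) x) = FreeMonoid.map Fin.castSucc (s n (g n (x.castPred h))) := by
        simp [g, h, s]
      rw [hs]
      have := map_rel castSucc_sm (ih (x.castPred h))
      rwa [FreeMonoid.map_of, Fin.castSucc_castPred] at this

theorem s_psi : ∀ n (u : FreeMonoid (Fin n)), conGen (ftRel (Fin n)) (s n (psi n u)) u := by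
  intro n u
  induction u using FreeMonoid.recOn with
  | one =>
    rw [map_one]
    rw [show (1 : M n) = Mone n from rfl, s_one]
    exact (conGen _).refl _
  | of_mul x u ihu =>
    have e : psi n (FreeMonoid.of x * u) = Mmul n (g n x) (psi n u) := by
      rw [map_mul, mul_def]
      simp [psi]
    rw [e]
    exact (conGen _).trans (s_mul n (g n x) (psi n u))
      ((conGen _).mul (s_g n x) ihu)

theorem g_idem : ∀ n (x : Fin n), Mmul n (g n x) (g n x) = g n x := by
  intro n
  induction n with
  | zero => intro x; exact x.elim0
  | succ n ih =>
    intro x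
    by_cases h : x = Fin.last n
    · simp [g, h, Mmul, Mone_mul, Mmul_one]
      rfl
    · simp [g, h, Mmul, ih]
      rfl

theorem g_braid : ∀ n (x y : Fin n), x < y →
    Mmul n (Mmul n (g n y) (g n x)) (g n y) = Mmul n (g n y) (g n x) := by
  intro n
  induction n with
  | zero => intro x; exact x.elim0
  | succ n ih =>
    intro x y hxy
    have hx : x ≠ Fin.last n := by
      intro hx
      subst hx
      exact absurd (Fin.le_last y) (not_le.2 hxy)
    by_cases hy : y = Fin.last n
    · simp [g, hy, hx, Mmul, Mone_mul, Mmul_one]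
      rfl
    · have hlt : x.castPred hx < y.castPred hy := by
        rw [← Fin.castSucc_lt_castSucc_iff, Fin.castSucc_castPred, Fin.castSucc_castPred]
        exact hxy
      simp [g, hx, hy, Mmul, ih _ _ hlt]
      rfl

theorem rel_le_ker (n : ℕ) : conGen (ftRel (Fin n)) ≤ Con.ker (psi n) := by
  apply Con.conGen_le.2
  rintro a b (⟨x, rfl, rfl⟩ | ⟨x, y, hxy, rfl, rfl⟩) <;> rw [Con.ker_rel]
  · rw [map_mul]
    simp only [psi, FreeMonoid.lift_eval_of]
    rw [mul_def, g_idem]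
  · rw [map_mul, map_mul]
    simp only [psi, FreeMonoid.lift_eval_of]
    rw [mul_def, mul_def, g_braid n x y hxy]

noncomputable def equivM (n : ℕ) : (conGen (ftRel (Fin n))).Quotient ≃ M n where
  toFun := Con.lift _ (psi n) (rel_le_ker n)
  invFun := fun m => ((s n m : FreeMonoid (Fin n)) : (conGen (ftRel (Fin n))).Quotient)
  left_inv := by
    intro q
    induction q using Con.induction_on with
    | H u =>
      rw [Con.lift_coe]
      exact (Con.eq _).2 (s_psi n u)
  right_inv := fun m => by rw [Con.lift_coe, psi_s]

theorem finite_M : ∀ n, Finite (M n)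
  | 0 => inferInstanceAs (Finite PUnit.{1})
  | n+1 =>
    have := finite_M n
    inferInstanceAs (Finite (M n ⊕ M n × M n))

theorem card_M : ∀ n, Nat.card (M n) = ftCount n
  | 0 => by
    show Nat.card PUnit.{1} = 1
    simp
  | n+1 => by
    have fin := finite_M n
    show Nat.card (M n ⊕ M n × M n) = ftCount (n+1)
    rw [Nat.card_sum, Nat.card_prod, card_M n]
    show ftCount n + ftCount n * ftCount n = ftCount n ^ 2 + ftCount n
    ring

theorem map_map_symm {X Y : Type*} (e : X ≃ Y) (u : FreeMonoid X) :
    FreeMonoid.map e.symm (FreeMonoid.map e u) = u := by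
  rw [← MonoidHom.comp_apply, ← FreeMonoid.map_comp, Equiv.symm_comp_self]
  simp

noncomputable def ftEquiv {X Y : Type*} [LinearOrder X] [LinearOrder Y] (e : X ≃o Y) :
    (conGen (ftRel X)).Quotient ≃ (conGen (ftRel Y)).Quotient where
  toFun := Quotient.map (FreeMonoid.map e) (fun u v h => map_rel e.strictMono h)
  invFun := Quotient.map (FreeMonoid.map e.symm) (fun u v h => map_rel e.symm.strictMono h)
  left_inv := by
    intro q
    induction q using Quotient.inductionOn with
    | h u =>
      rw [Quotient.map_mk, Quotient.map_mk]
      congr 1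
      exact map_map_symm e.toEquiv u
  right_inv := by
    intro q
    induction q using Quotient.inductionOn with
    | h u =>
      rw [Quotient.map_mk, Quotient.map_mk]
      congr 1
      exact map_map_symm e.toEquiv.symm u

theorem card_ft {X : Type*} [LinearOrder X] [Fintype X] :
    Nat.card (FreeTreeMonoid X) = ftCount (Fintype.card X) := by
  set n := Fintype.card X with hn
  have e : Fin n ≃o X := Fintype.orderIsoFinOfCardEq X rfl
  have h : Nat.card (FreeTreeMonoid X) = Nat.card (M n) :=
    Nat.card_congr ((ftEquiv e.symm).trans (equivM n))
  rw [h, card_M]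

end FTAux

/-- The number of elements of the free tree monoid on an alphabet of size `n` is `a(n)`, where
`a(0) = 1` and `a(k) = a(k-1)² + a(k-1)`. Equivalently, a word `u` is reduced if and only if,
for every letter `y` dominating all letters of `u` (in particular the largest letter of `X`),
`y` appears at most once in `u` and if `u = v·y·w` then `v` and `w` are (recursively) reduced
words over the letters strictly smaller than `y`. -/
theorem freeTreeMonoid_card {X : Type*} [LinearOrder X] [Fintype X] :
    Nat.card (FreeTreeMonoid X) = ftCount (Fintype.card X) ∧
    (∀ u : List X, FTReduced u ↔
      ∀ y : X, (∀ a ∈ u, a ≤ y) →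
        u.count y ≤ 1 ∧ ∀ v w : List X, u = v ++ [y] ++ w → FTReduced v ∧ FTReduced w) :=
  ⟨FTAux.card_ft, fun u => FTAux.reduced_iff u⟩
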